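/- The fixed point of the M-Q-M iteration is not unique: if Q is a fixed point of U (i.e., U Q = Q), then for every constant c ≥ 0 the Q-function Q − c (subtracting c pointwise) is also a fixed point of U; dually, if Q is a fixed point of L, then Q + c is a fixed point of L for every c ≥ 0. In particular, U and L each admit more than one fixed point. -/

import Mathlib

/-- Maximum of a real-valued function over a nonempty finite type. -/
noncomputable def qmax {I : Type*} [Fintype I] [Nonempty I] (f : I → ℝ) : ℝ :=
  Finset.univ.sup' Finset.univ_nonempty f

/-- Q-M Bellman operator `T_max`:
`(T_max Q)(s,a) = max_{s' ∈ N(s,a)} [R(s,a,s') + γ max_{a'} Q(s',a')]`. -/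
noncomputable def Tmax {S A : Type*} [Fintype A] [Nonempty A]
    (γ : ℝ) (R : S → A → S → ℝ) (N : S → A → Finset S) (hN : ∀ s a, (N s a).Nonempty)
    (Q : S → A → ℝ) : S → A → ℝ :=
  fun s a => (N s a).sup' (hN s a) fun s' => R s a s' + γ * qmax (Q s')

/-- Q-M Bellman operator `T_min`:
`(T_min Q)(s,a) = min_{s' ∈ N(s,a)} [R(s,a,s') + γ max_{a'} Q(s',a')]`. -/
noncomputable def Tmin {S A : Type*} [Fintype A] [Nonempty A]
    (γ : ℝ) (R : S → A → S → ℝ) (N : S → A → Finset S) (hN : ∀ s a, (N s a).Nonempty)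
    (Q : S → A → ℝ) : S → A → ℝ :=
  fun s a => (N s a).inf' (hN s a) fun s' => R s a s' + γ * qmax (Q s')

/-- M-Q-M upper-bound operator `(U Q)(s,a) = min (Q(s,a), (T_max Q)(s,a))`. -/
noncomputable def Uop {S A : Type*} [Fintype A] [Nonempty A]
    (γ : ℝ) (R : S → A → S → ℝ) (N : S → A → Finset S) (hN : ∀ s a, (N s a).Nonempty)
    (Q : S → A → ℝ) : S → A → ℝ :=
  fun s a => min (Q s a) (Tmax γ R N hN Q s a)

/-- M-Q-M lower-bound operator `(L Q)(s,a) = max (Q(s,a), (T_min Q)(s,a))`. -/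
noncomputable def Lop {S A : Type*} [Fintype A] [Nonempty A]
    (γ : ℝ) (R : S → A → S → ℝ) (N : S → A → Finset S) (hN : ∀ s a, (N s a).Nonempty)
    (Q : S → A → ℝ) : S → A → ℝ :=
  fun s a => max (Q s a) (Tmin γ R N hN Q s a)

lemma sup'_add_const {β : Type*} (t : Finset β) (ht : t.Nonempty) (f : β → ℝ) (c : ℝ) :
    (t.sup' ht fun b => f b + c) = t.sup' ht f + c := by
  apply le_antisymm
  · exact Finset.sup'_le _ _ fun b hb => add_le_add_left (Finset.le_sup' f hb) c
  · obtain ⟨b, hb, hbe⟩ := Finset.exists_mem_eq_sup' ht f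
    rw [hbe]
    exact Finset.le_sup' (fun b => f b + c) hb

lemma inf'_add_const {β : Type*} (t : Finset β) (ht : t.Nonempty) (f : β → ℝ) (c : ℝ) :
    (t.inf' ht fun b => f b + c) = t.inf' ht f + c := by
  apply le_antisymm
  · obtain ⟨b, hb, hbe⟩ := Finset.exists_mem_eq_inf' ht f
    rw [hbe]
    exact Finset.inf'_le _ hb
  · exact Finset.le_inf' _ _ fun b hb => add_le_add_left (Finset.inf'_le f hb) c

lemma qmax_add_const {I : Type*} [Fintype I] [Nonempty I] (f : I → ℝ) (c : ℝ) :
    qmax (fun i => f i + c) = qmax f + c :=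
  sup'_add_const _ _ f c

lemma Tmax_shift {S A : Type*} [Fintype A] [Nonempty A]
    (γ : ℝ) (R : S → A → S → ℝ) (N : S → A → Finset S) (hN : ∀ s a, (N s a).Nonempty)
    (Q : S → A → ℝ) (c : ℝ) (s : S) (a : A) :
    Tmax γ R N hN (fun s a => Q s a + c) s a = Tmax γ R N hN Q s a + γ * c := by
  unfold Tmax
  rw [← sup'_add_const (N s a) (hN s a) (fun s' => R s a s' + γ * qmax (Q s')) (γ * c)]
  refine Finset.sup'_congr (hN s a) rfl fun s' _ => ?_
  rw [qmax_add_const]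
  ring

lemma Tmin_shift {S A : Type*} [Fintype A] [Nonempty A]
    (γ : ℝ) (R : S → A → S → ℝ) (N : S → A → Finset S) (hN : ∀ s a, (N s a).Nonempty)
    (Q : S → A → ℝ) (c : ℝ) (s : S) (a : A) :
    Tmin γ R N hN (fun s a => Q s a + c) s a = Tmin γ R N hN Q s a + γ * c := by
  unfold Tmin
  rw [← inf'_add_const (N s a) (hN s a) (fun s' => R s a s' + γ * qmax (Q s')) (γ * c)]
  refine Finset.inf'_congr (hN s a) rfl fun s' _ => ?_
  rw [qmax_add_const]
  ring

lemma U_shift {S A : Type*} [Fintype A] [Nonempty A]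
    (γ : ℝ) (hγ0 : 0 ≤ γ) (hγ1 : γ < 1)
    (R : S → A → S → ℝ) (N : S → A → Finset S) (hN : ∀ s a, (N s a).Nonempty)
    (Q : S → A → ℝ) (c : ℝ) (hc : 0 ≤ c) (hQ : Uop γ R N hN Q = Q) :
    Uop γ R N hN (fun s a => Q s a - c) = fun s a => Q s a - c := by
  have hle : ∀ s a, Q s a ≤ Tmax γ R N hN Q s a := by
    intro s a
    have := congrFun (congrFun hQ s) a
    unfold Uop at this
    by_contra h
    push_neg at h
    rw [min_eq_right h.le] at this
    exact absurd this (ne_of_lt h)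
  funext s a
  unfold Uop
  have hsh : Tmax γ R N hN (fun s a => Q s a - c) s a = Tmax γ R N hN Q s a - γ * c := by
    have := Tmax_shift γ R N hN Q (-c) s a
    simpa [sub_eq_add_neg, mul_neg] using this
  rw [hsh, min_eq_left]
  have h1 : γ * c ≤ c := by nlinarith
  show Q s a - c ≤ _
  linarith [hle s a]

lemma L_shift {S A : Type*} [Fintype A] [Nonempty A]
    (γ : ℝ) (hγ0 : 0 ≤ γ) (hγ1 : γ < 1)
    (R : S → A → S → ℝ) (N : S → A → Finset S) (hN : ∀ s a, (N s a).Nonempty)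
    (Q : S → A → ℝ) (c : ℝ) (hc : 0 ≤ c) (hQ : Lop γ R N hN Q = Q) :
    Lop γ R N hN (fun s a => Q s a + c) = fun s a => Q s a + c := by
  have hle : ∀ s a, Tmin γ R N hN Q s a ≤ Q s a := by
    intro s a
    have := congrFun (congrFun hQ s) a
    unfold Lop at this
    by_contra h
    push_neg at h
    rw [max_eq_right h.le] at this
    exact absurd this (ne_of_lt h).symm
  funext s a
  unfold Lop
  rw [Tmin_shift, max_eq_left]
  have h1 : γ * c ≤ c := by nlinarith
  show _ ≤ Q s a + c
  linarith [hle s a]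

/-- Non-uniqueness of M-Q-M fixed points: fixed points of `U` are preserved under subtracting a
nonnegative constant, fixed points of `L` under adding one; in particular, `U` and `L` each
admit more than one fixed point. -/
theorem mqm_fixed_point_not_unique {S A : Type*} [Fintype S] [Fintype A] [Nonempty S] [Nonempty A]
    (γ : ℝ) (hγ0 : 0 ≤ γ) (hγ1 : γ < 1)
    (R : S → A → S → ℝ) (N : S → A → Finset S) (hN : ∀ s a, (N s a).Nonempty) :
    (∀ (Q : S → A → ℝ) (c : ℝ), 0 ≤ c → Uop γ R N hN Q = Q →
        Uop γ R N hN (fun s a => Q s a - c) = fun s a => Q s a - c) ∧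
      (∀ (Q : S → A → ℝ) (c : ℝ), 0 ≤ c → Lop γ R N hN Q = Q →
        Lop γ R N hN (fun s a => Q s a + c) = fun s a => Q s a + c) ∧
      (∃ Q₁ Q₂ : S → A → ℝ, Uop γ R N hN Q₁ = Q₁ ∧ Uop γ R N hN Q₂ = Q₂ ∧ Q₁ ≠ Q₂) ∧
      (∃ Q₁ Q₂ : S → A → ℝ, Lop γ R N hN Q₁ = Q₁ ∧ Lop γ R N hN Q₂ = Q₂ ∧ Q₁ ≠ Q₂) := by
  have h1γ : (0:ℝ) < 1 - γ := by linarith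
  have qmax_const : ∀ q : ℝ, qmax (fun _ : A => q) = q := fun q => by
    rw [qmax, Finset.sup'_const]
  refine ⟨fun Q c hc hQ => U_shift γ hγ0 hγ1 R N hN Q c hc hQ,
    fun Q c hc hQ => L_shift γ hγ0 hγ1 R N hN Q c hc hQ, ?_, ?_⟩
  · -- fixed points of U
    obtain ⟨⟨s₀, a₀, s₀'⟩, _, hm⟩ := Finset.exists_mem_eq_inf'
      (Finset.univ_nonempty (α := S × A × S)) (fun p => R p.1 p.2.1 p.2.2)
    set m := Finset.univ.inf' Finset.univ_nonempty (fun p : S × A × S => R p.1 p.2.1 p.2.2)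
      with hm_def
    have hmle : ∀ s a s', m ≤ R s a s' :=
      fun s a s' => Finset.inf'_le _ (Finset.mem_univ (s, a, s'))
    set q := m / (1 - γ) with hq_def
    have hq : (1 - γ) * q = m := by rw [hq_def]; field_simp [h1γ.ne']
    have hfix : Uop γ R N hN (fun _ _ => q) = fun _ _ => q := by
      funext s a
      unfold Uop
      rw [min_eq_left]
      unfold Tmax
      obtain ⟨s', hs'⟩ := hN s a
      have hstep : q ≤ R s a s' + γ * qmax ((fun (_ : S) (_ : A) => q) s') := by
        simp only [qmax_const]; have := hmle s a s'; nlinarith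
      exact le_trans hstep (Finset.le_sup' (fun s' => R s a s' + γ * qmax ((fun _ _ => q) s')) hs')
    refine ⟨(fun _ _ => q), (fun s a => (fun _ _ => q) s a - 1),
      hfix, U_shift γ hγ0 hγ1 R N hN _ 1 zero_le_one hfix, ?_⟩
    intro h
    have := congrFun (congrFun h (Classical.arbitrary S)) (Classical.arbitrary A)
    simp only at this
    linarith
  · -- fixed points of L
    set M := Finset.univ.sup' Finset.univ_nonempty (fun p : S × A × S => R p.1 p.2.1 p.2.2)
      with hM_def
    have hMle : ∀ s a s', R s a s' ≤ M :=
      fun s a s' =>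
        Finset.le_sup' (fun p : S × A × S => R p.1 p.2.1 p.2.2)
          (Finset.mem_univ (s, a, s'))
    set q := M / (1 - γ) with hq_def
    have hq : (1 - γ) * q = M := by rw [hq_def]; field_simp [h1γ.ne']
    have hfix : Lop γ R N hN (fun _ _ => q) = fun _ _ => q := by
      funext s a
      unfold Lop
      rw [max_eq_left]
      unfold Tmin
      obtain ⟨s', hs'⟩ := hN s a
      have hstep : R s a s' + γ * qmax ((fun (_ : S) (_ : A) => q) s') ≤ q := by
        simp only [qmax_const]; have := hMle s a s'; nlinarith
      exact le_trans (Finset.inf'_le (fun s' => R s a s' + γ * qmax ((fun _ _ => q) s')) hs') hstep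
    refine ⟨(fun _ _ => q), (fun s a => (fun _ _ => q) s a + 1),
      hfix, L_shift γ hγ0 hγ1 R N hN _ 1 zero_le_one hfix, ?_⟩
    intro h
    have := congrFun (congrFun h (Classical.arbitrary S)) (Classical.arbitrary A)
    simp only at this
    linarith
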